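/- The speed formula in the case δ = 0 via the Airy equation: let γ > 0 and let A : [0,∞) → ℝ be a twice continuously differentiable solution of A″(z) = 2γz·A(z) with A(0) = 1/2, such that A is strictly decreasing and A(z) → 0 as z → ∞. Then A(z) = Ai((2γ)^{1/3}z)/(2·Ai(0)) for all z ≥ 0, where Ai is the Airy function, and −A′(0)/(2A(0)) = (Γ(2/3)/Γ(1/3))·(3γ/4)^{1/3}, where Γ is the Gamma function. -/

import Mathlib

open Filter Set

/-- If `g` has positive derivative at `x`, then `g > g x` just to the right. -/
lemma aux_pos_right {g : ℝ → ℝ} {x c : ℝ} (hg : HasDerivAt g c x) (hc : 0 < c) :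
    ∀ᶠ z in nhdsWithin x (Ioi x), g x < g z := by
  have hs := hasDerivAt_iff_tendsto_slope.mp hg
  have h1 : ∀ᶠ z in nhdsWithin x ({x}ᶜ), 0 < slope g x z :=
    hs.eventually_const_lt hc
  have h2 : nhdsWithin x (Ioi x) ≤ nhdsWithin x ({x}ᶜ) :=
    nhdsWithin_mono x (by intro z hz; exact ne_of_gt hz)
  filter_upwards [h1.filter_mono h2, self_mem_nhdsWithin] with z hz hz'
  have hzx : 0 < z - x := sub_pos.mpr hz'
  have hmul := mul_pos hz hzx
  rw [slope_def_field] at hmul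
  have h3 : 0 < g z - g x := by
    rw [div_mul_cancel₀ _ (ne_of_gt hzx)] at hmul
    linarith
  linarith

/-- Uniqueness half: a `C²` solution of `D″ = 2γ z D` on `[0,∞)` with `D 0 = 0` tending to `0`
is nonpositive on `[0,∞)`. -/
lemma aux_nonpos (γ : ℝ) (hγ : 0 < γ) (D : ℝ → ℝ) (hDC2 : ContDiff ℝ 2 D)
    (hODE : ∀ z ≥ (0:ℝ), deriv (deriv D) z = 2*γ*z*D z)
    (hD0 : D 0 = 0) (hlim : Tendsto D atTop (nhds 0)) :
    ∀ z ≥ (0:ℝ), D z ≤ 0 := by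
  by_contra hcon
  push_neg at hcon
  obtain ⟨z0, hz0, hDz0⟩ := hcon
  set ε := D z0 with hε
  have hεpos : 0 < ε := hDz0
  obtain ⟨M, hM⟩ := (hlim.eventually_lt_const hεpos).exists_forall_of_atTop
  set M' := max M z0 with hM'
  have hz0M : z0 ∈ Icc (0:ℝ) M' := ⟨hz0, le_max_right _ _⟩
  have hcont : Continuous D := hDC2.continuous
  obtain ⟨zs, hzsmem, hzsmax⟩ :=
    (isCompact_Icc (a := (0:ℝ)) (b := M')).exists_isMaxOn ⟨z0, hz0M⟩ hcont.continuousOn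
  have hDzs : ε ≤ D zs := hzsmax hz0M
  have hzspos : 0 < zs := by
    rcases lt_or_eq_of_le hzsmem.1 with h | h
    · exact h
    · exfalso; rw [← h, hD0] at hDzs; linarith
  have hglob : ∀ z > (0:ℝ), D z ≤ D zs := by
    intro z hz
    rcases le_or_gt z M' with h | h
    · exact hzsmax ⟨le_of_lt hz, h⟩
    · have : D z < ε := hM z (le_of_lt (lt_of_le_of_lt (le_max_left _ _) h))
      linarith
  have hlocal : IsLocalMax D zs := by
    filter_upwards [isOpen_Ioi.mem_nhds hzspos] with z hz
    exact hglob z hz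
  have hderiv0 : deriv D zs = 0 := hlocal.deriv_eq_zero
  have hC1 : ContDiff ℝ 1 (deriv D) := by
    have h2 : ContDiff ℝ (1+1) D := by norm_num at hDC2 ⊢; exact hDC2
    exact (contDiff_succ_iff_deriv.mp h2).2.2
  have hD'deriv : HasDerivAt (deriv D) (2*γ*zs*D zs) zs := by
    have h := ((hC1.differentiable (by norm_num)) zs).hasDerivAt
    rwa [hODE zs (le_of_lt hzspos)] at h
  have hpos : 0 < 2*γ*zs*D zs := by
    have hp : 0 < D zs := lt_of_lt_of_le hεpos hDzs
    positivity
  have hev : ∀ᶠ z in nhdsWithin zs (Ioi zs), deriv D zs < deriv D z :=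
    aux_pos_right hD'deriv hpos
  rw [hderiv0] at hev
  obtain ⟨u, hu, huIoo⟩ := mem_nhdsGT_iff_exists_Ioo_subset.mp hev
  have huzs : zs < u := hu
  set w := (zs + u)/2 with hw
  have hwmem : w ∈ Ioo zs u := ⟨by rw [hw]; linarith, by rw [hw]; linarith⟩
  have hmono : StrictMonoOn D (Icc zs w) := by
    apply strictMonoOn_of_deriv_pos (convex_Icc _ _) hcont.continuousOn
    intro z hz
    rw [interior_Icc] at hz
    exact huIoo ⟨hz.1, lt_trans hz.2 hwmem.2⟩
  have h1 : D zs < D w := hmono ⟨le_rfl, le_of_lt hwmem.1⟩ ⟨le_of_lt hwmem.1, le_rfl⟩ hwmem.1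
  have h2 : D w ≤ D zs := hglob w (lt_trans hzspos hwmem.1)
  linarith

/-- **The speed formula in the case `δ = 0` via the Airy equation** (Remark 2.6(3) of
the paper). Let `Ai` be the Airy function: the solution of `u″(z) = z·u(z)` on `ℝ`
which is positive on `[0,∞)` and tends to `0` at `+∞`, normalised by
`Ai(0) = 1/(3^{2/3}Γ(2/3))` and `Ai′(0) = −1/(3^{1/3}Γ(1/3))`. If `A : [0,∞) → ℝ` is a
twice continuously differentiable solution of `A″(z) = 2γz·A(z)` with `A(0) = 1/2`,
`A` strictly decreasing and `A(z) → 0` as `z → ∞`, then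
`A(z) = Ai((2γ)^{1/3}z)/(2·Ai(0))` for all `z ≥ 0`, and
`−A′(0)/(2A(0)) = (Γ(2/3)/Γ(1/3))·(3γ/4)^{1/3}`. -/
theorem speed_delta_zero (γ : ℝ) (hγ : 0 < γ)
    (Ai : ℝ → ℝ) (hAiC2 : ContDiff ℝ 2 Ai)
    (hAiODE : ∀ z : ℝ, deriv (deriv Ai) z = z * Ai z)
    (hAipos : ∀ z ≥ (0:ℝ), 0 < Ai z)
    (hAilim : Tendsto Ai atTop (nhds 0))
    (hAi0 : Ai 0 = 1 / (3 ^ ((2:ℝ)/3) * Real.Gamma (2/3)))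
    (hAi'0 : deriv Ai 0 = -(1 / (3 ^ ((1:ℝ)/3) * Real.Gamma (1/3))))
    (A : ℝ → ℝ) (hAC2 : ContDiff ℝ 2 A)
    (hAODE : ∀ z ≥ (0:ℝ), deriv (deriv A) z = 2*γ*z*A z)
    (hA0 : A 0 = 1/2)
    (hAanti : StrictAntiOn A (Ici 0))
    (hAlim : Tendsto A atTop (nhds 0)) :
    (∀ z ≥ (0:ℝ), A z = Ai ((2*γ) ^ ((1:ℝ)/3) * z) / (2 * Ai 0)) ∧
    -(deriv A 0) / (2 * A 0)
      = (Real.Gamma (2/3) / Real.Gamma (1/3)) * (3*γ/4) ^ ((1:ℝ)/3) := by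
  have h2γ : (0:ℝ) < 2*γ := by linarith
  set c : ℝ := (2*γ) ^ ((1:ℝ)/3) with hc
  have hcpos : 0 < c := Real.rpow_pos_of_pos h2γ _
  have hc3 : c^3 = 2*γ := by
    rw [hc, ← Real.rpow_natCast ((2*γ) ^ ((1:ℝ)/3)) 3, ← Real.rpow_mul (le_of_lt h2γ)]
    norm_num
  have hAi0pos : 0 < Ai 0 := hAipos 0 le_rfl
  set B : ℝ → ℝ := fun z => Ai (c * z) / (2 * Ai 0) with hB
  have hlin : ∀ z : ℝ, HasDerivAt (fun z : ℝ => c * z) c z := by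
    intro z; simpa using (hasDerivAt_id z).const_mul c
  have hAidiff : Differentiable ℝ Ai := hAiC2.differentiable (by norm_num)
  have hAi'C1 : ContDiff ℝ 1 (deriv Ai) := by
    have h2 : ContDiff ℝ (1+1) Ai := by norm_num at hAiC2 ⊢; exact hAiC2
    exact (contDiff_succ_iff_deriv.mp h2).2.2
  have hAi'diff : Differentiable ℝ (deriv Ai) := hAi'C1.differentiable (by norm_num)
  have hBderiv : ∀ z : ℝ, HasDerivAt B (deriv Ai (c*z) * c / (2 * Ai 0)) z := by
    intro z
    exact (((hAidiff (c*z)).hasDerivAt.comp z (hlin z))).div_const _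
  have hBderiv_eq : deriv B = fun z => deriv Ai (c*z) * c / (2 * Ai 0) := by
    funext z; exact (hBderiv z).deriv
  have hBderiv2 : ∀ z : ℝ, deriv (deriv B) z = 2*γ*z*B z := by
    intro z
    have h1 : HasDerivAt (fun z => deriv Ai (c*z) * c / (2 * Ai 0))
        (deriv (deriv Ai) (c*z) * c * c / (2 * Ai 0)) z :=
      (((hAi'diff (c*z)).hasDerivAt.comp z (hlin z)).mul_const c).div_const _
    rw [hBderiv_eq, h1.deriv, hAiODE (c*z)]
    have hccc : c * c * c = 2*γ := by rw [← hc3]; ring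
    have he : c * z * Ai (c*z) * c * c = 2*γ*z*Ai (c*z) := by
      calc c * z * Ai (c*z) * c * c = (c*c*c) * z * Ai (c*z) := by ring
        _ = 2*γ*z*Ai (c*z) := by rw [hccc]
    rw [he, hB]; ring
  have hBC2 : ContDiff ℝ 2 B :=
    (hAiC2.comp (contDiff_const.mul contDiff_id)).div_const _
  have hB0 : B 0 = 1/2 := by
    rw [hB]; simp only [mul_zero]
    field_simp
  have hBlim : Tendsto B atTop (nhds 0) := by
    have h1 : Tendsto (fun z : ℝ => c * z) atTop atTop :=
      Tendsto.const_mul_atTop hcpos tendsto_id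
    have h2 : Tendsto (fun z => Ai (c*z)) atTop (nhds 0) := hAilim.comp h1
    simpa using h2.div_const (2 * Ai 0)
  set D : ℝ → ℝ := fun z => A z - B z with hD
  have hDC2 : ContDiff ℝ 2 D := hAC2.sub hBC2
  have hAdiff : Differentiable ℝ A := hAC2.differentiable (by norm_num)
  have hA'C1 : ContDiff ℝ 1 (deriv A) := by
    have h2 : ContDiff ℝ (1+1) A := by norm_num at hAC2 ⊢; exact hAC2
    exact (contDiff_succ_iff_deriv.mp h2).2.2
  have hA'diff : Differentiable ℝ (deriv A) := hA'C1.differentiable (by norm_num)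
  have hB'diff : Differentiable ℝ (deriv B) := by
    rw [hBderiv_eq]
    exact ((hAi'diff.comp ((differentiable_const c).mul differentiable_id)).mul_const c).div_const _
  have hDderiv_eq : deriv D = fun z => deriv A z - deriv B z := by
    funext z
    rw [hBderiv_eq]
    exact ((hAdiff z).hasDerivAt.sub (hBderiv z)).deriv
  have hDODE : ∀ z ≥ (0:ℝ), deriv (deriv D) z = 2*γ*z*D z := by
    intro z hz
    rw [hDderiv_eq]
    have h1 : deriv (fun z => deriv A z - deriv B z) z = deriv (deriv A) z - deriv (deriv B) z :=
      ((hA'diff z).hasDerivAt.sub (hB'diff z).hasDerivAt).deriv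
    rw [h1, hAODE z hz, hBderiv2 z, hD]
    ring
  have hD0 : D 0 = 0 := by rw [hD]; simp [hA0, hB0]
  have hDlim : Tendsto D atTop (nhds 0) := by
    simpa using hAlim.sub hBlim
  have hD1 := aux_nonpos γ hγ D hDC2 hDODE hD0 hDlim
  have hD'diffAll : Differentiable ℝ (deriv D) := by
    rw [hDderiv_eq]; exact hA'diff.sub hB'diff
  have hD2 := aux_nonpos γ hγ (fun z => -D z) (hDC2.neg)
    (by
      intro z hz
      have e1 : deriv (fun z => -D z) = fun z => -deriv D z := by
        funext w; exact ((hDC2.differentiable (by norm_num) w).hasDerivAt.neg).deriv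
      rw [e1]
      have e2 : deriv (fun z => -deriv D z) z = -(deriv (deriv D) z) :=
        ((hD'diffAll z).hasDerivAt.neg).deriv
      rw [e2, hDODE z hz]; ring)
    (by simp [hD0]) (by simpa using hDlim.neg)
  have hDzero : ∀ z ≥ (0:ℝ), D z = 0 := by
    intro z hz
    have h1 := hD1 z hz
    have h2 := hD2 z hz
    simp only [neg_nonpos] at h2
    linarith
  have hmain : ∀ z ≥ (0:ℝ), A z = Ai (c * z) / (2 * Ai 0) := by
    intro z hz
    have hAB : A z = B z := sub_eq_zero.mp (hDzero z hz)
    rw [hAB]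
  refine ⟨hmain, ?_⟩
  have hud : UniqueDiffWithinAt ℝ (Ici (0:ℝ)) 0 := uniqueDiffOn_Ici 0 0 self_mem_Ici
  have hEq : EqOn A B (Ici 0) := fun z hz => by
    rw [hmain z hz]
  have h1 : derivWithin A (Ici 0) 0 = derivWithin B (Ici 0) 0 :=
    derivWithin_congr hEq (hEq self_mem_Ici)
  have h2 : derivWithin A (Ici 0) 0 = deriv A 0 :=
    ((hAdiff 0).hasDerivAt.hasDerivWithinAt).derivWithin hud
  have h3 : derivWithin B (Ici 0) 0 = deriv B 0 :=
    ((hBderiv 0).hasDerivWithinAt).derivWithin hud ▸ by rw [(hBderiv 0).deriv]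
  have hAB : deriv A 0 = deriv B 0 := by rw [← h2, h1, h3]
  have hB'0 : deriv B 0 = deriv Ai 0 * c / (2 * Ai 0) := by
    rw [hBderiv_eq]; simp
  rw [hAB, hB'0, hA0, hAi'0, hAi0]
  have hΓ13 : 0 < Real.Gamma (1/3) := Real.Gamma_pos_of_pos (by norm_num)
  have hΓ23 : 0 < Real.Gamma (2/3) := Real.Gamma_pos_of_pos (by norm_num)
  have h313 : (0:ℝ) < (3:ℝ) ^ ((1:ℝ)/3) := Real.rpow_pos_of_pos (by norm_num) _
  have h323 : (0:ℝ) < (3:ℝ) ^ ((2:ℝ)/3) := Real.rpow_pos_of_pos (by norm_num) _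
  have hkey : c * 3 ^ ((2:ℝ)/3) = 2 * (3*γ/4) ^ ((1:ℝ)/3) * 3 ^ ((1:ℝ)/3) := by
    have e0 : (3:ℝ) ^ ((2:ℝ)/3) = 3 ^ ((1:ℝ)/3) * 3 ^ ((1:ℝ)/3) := by
      rw [← Real.rpow_add (by norm_num : (0:ℝ) < 3)]; norm_num
    have e2 : c * (3:ℝ)^((1:ℝ)/3) = (6*γ)^((1:ℝ)/3) := by
      rw [hc, ← Real.mul_rpow (le_of_lt h2γ) (by norm_num)]
      ring_nf
    have e3 : ((6:ℝ)*γ)^((1:ℝ)/3) = 2 * (3*γ/4)^((1:ℝ)/3) := by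
      have h8 : ((8:ℝ))^((1:ℝ)/3) = 2 := by
        rw [show (8:ℝ) = 2^(3:ℕ) by norm_num, ← Real.rpow_natCast 2 3,
          ← Real.rpow_mul (by norm_num)]
        norm_num
      rw [show (6:ℝ)*γ = 8 * (3*γ/4) by ring,
        Real.mul_rpow (by norm_num) (by positivity), h8]
    calc c * 3 ^ ((2:ℝ)/3) = (c * 3 ^ ((1:ℝ)/3)) * 3 ^ ((1:ℝ)/3) := by rw [e0]; ring
      _ = 2 * (3*γ/4) ^ ((1:ℝ)/3) * 3 ^ ((1:ℝ)/3) := by rw [e2, e3]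
  field_simp
  nlinarith [hkey, mul_pos hΓ13 hΓ23, mul_pos h313 h323,
    mul_pos (mul_pos hΓ13 hΓ23) (mul_pos h313 h323)]
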